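/- arXiv:1907.07612 — 6 statements merged into one kernel-verified Lean document; each statement's English description precedes it below -/
import Mathlib

section
/- Every flip-set F ⊆ 2^ω fails to have the Baire property in the Cantor space 2^ω. -/
open Set

/-- `F ⊆ 2^ω` is a flip-set: whenever `z` and `w` differ in exactly one
coordinate, `z ∈ F ↔ w ∉ F`. -/
def IsFlipSet (F : Set (ℕ → Bool)) : Prop :=
  ∀ z w : ℕ → Bool, (∃ n, z n ≠ w n ∧ ∀ m, m ≠ n → z m = w m) → (z ∈ F ↔ w ∉ F)

lemma IsMeagre.union' {X : Type*} [TopologicalSpace X] {s t : Set X}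
    (hs : IsMeagre s) (ht : IsMeagre t) : IsMeagre (s ∪ t) := by
  rw [IsMeagre, Set.compl_union]
  exact Filter.inter_mem hs ht

/-- Flip coordinate `n`. -/
def flipAt (n : ℕ) (x : ℕ → Bool) : ℕ → Bool := fun m => if m = n then !(x m) else x m

lemma flipAt_invol (n : ℕ) : Function.Involutive (flipAt n) := by
  intro x; funext m; simp [flipAt]; split <;> simp

lemma flipAt_continuous (n : ℕ) : Continuous (flipAt n) := by
  refine continuous_pi fun m => ?_
  by_cases h : m = n
  · simp only [flipAt, h, if_pos rfl]
    exact (continuous_of_discreteTopology (f := not)).comp (continuous_apply n)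
  · simp only [flipAt, h, if_neg h]
    exact continuous_apply m

lemma flipAt_isOpenMap (n : ℕ) : IsOpenMap (flipAt n) := by
  intro U hU
  have : flipAt n '' U = flipAt n ⁻¹' U := by
    ext y
    constructor
    · rintro ⟨x, hx, rfl⟩; simpa [flipAt_invol n x] using hx
    · intro hy; exact ⟨flipAt n y, hy, flipAt_invol n y⟩
  rw [this]
  exact hU.preimage (flipAt_continuous n)

lemma flipAt_diff (n : ℕ) (y : ℕ → Bool) :
    ∃ m, flipAt n y m ≠ y m ∧ ∀ k, k ≠ m → flipAt n y k = y k := by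
  refine ⟨n, ?_, fun k hk => ?_⟩
  · simp [flipAt]
  · simp [flipAt, hk]

lemma flipAt_mem_iff {F : Set (ℕ → Bool)} (hF : IsFlipSet F) (n : ℕ) (y : ℕ → Bool) :
    flipAt n y ∈ F ↔ y ∉ F := hF _ _ (flipAt_diff n y)

/-- Every flip-set fails to have the Baire property in the
Cantor space `2^ω`: there is no open set `U` such that `F △ U` is meager. -/
theorem stmt1 (F : Set (ℕ → Bool)) (hF : IsFlipSet F) :
    ¬ ∃ U : Set (ℕ → Bool), IsOpen U ∧ IsMeagre (symmDiff F U) := by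
  rintro ⟨U, hU, hM⟩
  -- a general helper: no nonempty open set is meagre
  have not_meagre : ∀ C : Set (ℕ → Bool), IsOpen C → C.Nonempty → ¬ IsMeagre C := by
    intro C hCo hCn hCm
    have hd : Dense Cᶜ := dense_of_mem_residual hCm
    obtain ⟨y, hy1, hy2⟩ := hd.inter_open_nonempty C hCo hCn
    exact hy2 hy1
  by_cases hUe : U = ∅
  · subst hUe
    have hFm : IsMeagre F := by
      rwa [show (∅ : Set (ℕ → Bool)) = ⊥ from rfl, symmDiff_bot] at hM
    have hFc : IsMeagre Fᶜ := by
      have := (hFm.preimage_of_isOpenMap (flipAt_continuous 0) (flipAt_isOpenMap 0))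
      have heq : flipAt 0 ⁻¹' F = Fᶜ := by
        ext y; simp [Set.mem_preimage, flipAt_mem_iff hF 0 y]
      rwa [heq] at this
    have : IsMeagre (univ : Set (ℕ → Bool)) := by
      have := hFm.union' hFc
      simpa using this
    exact not_meagre univ isOpen_univ ⟨fun _ => true, trivial⟩ this
  · obtain ⟨x, hxU⟩ := Set.nonempty_iff_ne_empty.2 hUe
    obtain ⟨I, u, hu, hsub⟩ := isOpen_pi_iff.1 hU x hxU
    set C : Set (ℕ → Bool) := (I : Set ℕ).pi (fun i => {x i}) with hC
    have hCsub : C ⊆ U := by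
      refine subset_trans ?_ hsub
      intro y hy i hi
      have := hy i hi
      simp only [mem_singleton_iff] at this
      rw [this]; exact (hu i hi).2
    have hCo : IsOpen C := isOpen_set_pi I.finite_toSet (fun i _ => isOpen_discrete _)
    have hCn : C.Nonempty := ⟨x, fun i _ => rfl⟩
    obtain ⟨n, hn⟩ := I.exists_notMem
    have hflipC : ∀ y ∈ C, flipAt n y ∈ C := by
      intro y hy i hi
      have hin : i ≠ n := fun h => hn (h ▸ hi)
      simpa [flipAt, hin] using hy i hi
    have hA : IsMeagre (C ∩ Fᶜ) := by
      refine hM.mono ?_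
      intro y ⟨hyC, hyF⟩
      rw [Set.mem_symmDiff]
      exact Or.inr ⟨hCsub hyC, hyF⟩
    have hB : IsMeagre (C ∩ F) := by
      have := hA.preimage_of_isOpenMap (flipAt_continuous n) (flipAt_isOpenMap n)
      refine this.mono ?_
      intro y ⟨hyC, hyF⟩
      refine ⟨hflipC y hyC, ?_⟩
      simp only [Set.mem_compl_iff]
      rw [flipAt_mem_iff hF n y]
      simp [hyF]
    have hCm : IsMeagre C := by
      have := hA.union' hB
      have heq : C ∩ Fᶜ ∪ C ∩ F = C := by
        rw [← Set.inter_union_distrib_left]; simp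
      rwa [heq] at this
    exact not_meagre C hCo hCn hCm
end

section
/- Let Z, W, T be topological spaces and ξ, η < ω₁ countable ordinals. If f : Z → W is Σ⁰_{1+ξ}-measurable and g : W → T is Σ⁰_{1+η}-measurable, then g ∘ f is Σ⁰_{1+ξ+η}-measurable. -/
open Set

/-- The additive Borel classes `Σ⁰_ξ`: `Σ⁰_1` is the open sets, and for larger `ξ`
a set is in `Σ⁰_ξ` iff it is open or a countable union of complements of sets in
lower classes `Σ⁰_{ξₙ}` with `1 ≤ ξₙ < ξ`. -/
def Sigma0 (Z : Type*) [TopologicalSpace Z] (ξ : Ordinal.{0}) : Set (Set Z) :=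
  {A | IsOpen A ∨ ∃ g : ℕ → Set Z, ∃ o : ℕ → {o : Ordinal.{0} // 1 ≤ o ∧ o < ξ},
      (∀ n, g n ∈ Sigma0 Z (o n).1) ∧ A = ⋃ n, (g n)ᶜ}
termination_by ξ
decreasing_by exact (o n).2.2

/-- `f : Z → W` is `Σ⁰_α`-measurable if preimages of open sets are `Σ⁰_α`. -/
def Sigma0Measurable {Z W : Type*} [TopologicalSpace Z] [TopologicalSpace W]
    (α : Ordinal.{0}) (f : Z → W) : Prop :=
  ∀ U : Set W, IsOpen U → f ⁻¹' U ∈ Sigma0 Z α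

lemma Sigma0_mono {Z : Type*} [TopologicalSpace Z] {ξ₁ ξ₂ : Ordinal.{0}} (h : ξ₁ ≤ ξ₂) :
    Sigma0 Z ξ₁ ⊆ Sigma0 Z ξ₂ := by
  intro A hA
  rw [Sigma0] at hA ⊢
  rcases hA with h1 | ⟨g, o, hg, rfl⟩
  · exact Or.inl h1
  · exact Or.inr ⟨g, fun n => ⟨(o n).1, (o n).2.1, lt_of_lt_of_le (o n).2.2 h⟩, hg, rfl⟩

lemma Sigma0_preimage {Z W : Type*} [TopologicalSpace Z] [TopologicalSpace W]
    (ξ : Ordinal.{0}) (f : Z → W)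
    (hf : ∀ U : Set W, IsOpen U → f ⁻¹' U ∈ Sigma0 Z (1 + ξ)) :
    ∀ η (A : Set W), A ∈ Sigma0 W (1 + η) → f ⁻¹' A ∈ Sigma0 Z (1 + ξ + η) := by
  intro η
  induction η using Ordinal.induction with
  | h η IH =>
    intro A hA
    rw [Sigma0] at hA
    rcases hA with hopen | ⟨gs, o, hg, rfl⟩
    · exact Sigma0_mono (le_self_add (a := _) (b := _)) (hf A hopen)
    · have hlt : ∀ n, (o n).1 - 1 < η := fun n => by
        have h1 : 1 + ((o n).1 - 1) = (o n).1 := Ordinal.add_sub_cancel_of_le (o n).2.1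
        have := (o n).2.2
        rw [← h1] at this
        exact (add_lt_add_iff_left 1).mp this
      rw [Sigma0]
      refine Or.inr ⟨fun n => f ⁻¹' gs n,
        fun n => ⟨1 + ξ + ((o n).1 - 1), ?_, ?_⟩, fun n => ?_, ?_⟩
      · exact le_trans (le_self_add (a := 1) (b := ξ)) (le_self_add (a := _) (b := _))
      · exact (add_lt_add_iff_left (1 + ξ)).mpr (hlt n)
      · refine IH _ (hlt n) (gs n) ?_
        rw [Ordinal.add_sub_cancel_of_le (o n).2.1]
        exact hg n
      · simp

/-- If `f : Z → W` is `Σ⁰_{1+ξ}`-measurable and `g : W → T` is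
`Σ⁰_{1+η}`-measurable, where `ξ, η < ω₁`, then `g ∘ f` is
`Σ⁰_{1+ξ+η}`-measurable. -/
theorem stmt7 {Z W T : Type*} [TopologicalSpace Z] [TopologicalSpace W]
    [TopologicalSpace T] (ξ η : Ordinal.{0})
    (hξc : ξ.card ≤ Cardinal.aleph0) (hηc : η.card ≤ Cardinal.aleph0)
    (f : Z → W) (g : W → T)
    (hf : Sigma0Measurable (1 + ξ) f) (hg : Sigma0Measurable (1 + η) g) :
    Sigma0Measurable (1 + ξ + η) (g ∘ f) := by
  intro U hU
  have := Sigma0_preimage ξ f hf η (g ⁻¹' U) (hg U hU)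
  exact this
end

section
/- Let Z be a space and D ⊆ 𝒫(ω). Then there exists a 2^ω-universal set for Γ_D(Z), i.e., a set V ⊆ 2^ω × Z with V ∈ Γ_D(2^ω × Z) and {V_x : x ∈ 2^ω} = Γ_D(Z). -/
open Set

/-- The Hausdorff operation `H_D` applied to a sequence of subsets of `Z`. -/
def HausOp {Z : Type*} (D : Set (Set ℕ)) (A : ℕ → Set Z) : Set Z :=
  {x | {n | x ∈ A n} ∈ D}

/-- `Γ_D(Z)`: the results of the Hausdorff operation `H_D` applied to
sequences of open subsets of `Z`. -/
def GammaD (Z : Type*) [TopologicalSpace Z] (D : Set (Set ℕ)) : Set (Set Z) :=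
  {A | ∃ g : ℕ → Set Z, (∀ n, IsOpen (g n)) ∧ A = HausOp D g}

/-- For every separable metrizable space `Z` and `D ⊆ 𝒫(ω)`
there exists a `2^ω`-universal set for `Γ_D(Z)`: a set
`V ∈ Γ_D(2^ω × Z)` whose vertical sections are exactly the members of
`Γ_D(Z)`. -/
theorem stmt9 (Z : Type*) [TopologicalSpace Z]
    [TopologicalSpace.MetrizableSpace Z] [TopologicalSpace.SeparableSpace Z]
    (D : Set (Set ℕ)) :
    ∃ V : Set ((ℕ → Bool) × Z), V ∈ GammaD ((ℕ → Bool) × Z) D ∧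
      {S : Set Z | ∃ x : ℕ → Bool, S = {y | (x, y) ∈ V}} = GammaD Z D := by
  classical
  have hsc : SecondCountableTopology Z := by
    letI := TopologicalSpace.metrizableSpaceMetric Z
    exact UniformSpace.secondCountable_of_separable Z
  obtain ⟨B, hBc, hBe, hB⟩ := TopologicalSpace.exists_countable_basis Z
  have hc : (insert (∅ : Set Z) B).Countable := hBc.insert _
  obtain ⟨f, hf⟩ := Set.Countable.exists_eq_range hc (Set.insert_nonempty _ _)
  have hfopen : ∀ n, IsOpen (f n) := by
    intro n
    have hn : f n ∈ insert (∅ : Set Z) B := hf ▸ Set.mem_range_self n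
    rcases hn with h | h
    · rw [h]; exact isOpen_empty
    · exact hB.isOpen h
  have hcover : ∀ U : Set Z, IsOpen U → ∀ y ∈ U, ∃ m, f m ⊆ U ∧ y ∈ f m := by
    intro U hU y hy
    obtain ⟨s, hsB, hys, hsU⟩ := hB.exists_subset_of_mem_open hy hU
    have : s ∈ range f := hf ▸ Set.mem_insert_of_mem _ hsB
    obtain ⟨m, rfl⟩ := this
    exact ⟨m, hsU, hys⟩
  set W : ℕ → Set ((ℕ → Bool) × Z) :=
    fun n => {p : (ℕ → Bool) × Z | ∃ m, p.1 (Nat.pair n m) = true ∧ p.2 ∈ f m} with hWdef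
  have hWopen : ∀ n, IsOpen (W n) := by
    intro n
    have hEq : W n = ⋃ m, {x : ℕ → Bool | x (Nat.pair n m) = true} ×ˢ f m := by
      ext p; simp [hWdef, Set.mem_iUnion, Set.mem_prod]
    rw [hEq]
    refine isOpen_iUnion fun m => IsOpen.prod ?_ (hfopen m)
    have hcont : Continuous fun x : ℕ → Bool => x (Nat.pair n m) := continuous_apply _
    exact hcont.isOpen_preimage {b | b = true} (isOpen_discrete _)
  refine ⟨HausOp D W, ⟨W, hWopen, rfl⟩, ?_⟩
  ext S
  constructor
  · rintro ⟨x, rfl⟩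
    refine ⟨fun n => {y : Z | ∃ m, x (Nat.pair n m) = true ∧ y ∈ f m}, ?_, ?_⟩
    · intro n
      have hEq : {y : Z | ∃ m, x (Nat.pair n m) = true ∧ y ∈ f m}
          = ⋃ m ∈ {m | x (Nat.pair n m) = true}, f m := by
        ext y; simp [Set.mem_iUnion]
      show IsOpen {y : Z | ∃ m, x (Nat.pair n m) = true ∧ y ∈ f m}
      rw [hEq]
      exact isOpen_biUnion fun m _ => hfopen m
    · rfl
  · rintro ⟨g, hg, rfl⟩
    refine ⟨fun k => decide (f (Nat.unpair k).2 ⊆ g (Nat.unpair k).1), ?_⟩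
    ext y
    simp only [HausOp, Set.mem_setOf_eq, hWdef, Nat.unpair_pair]
    have hsets : {n | ∃ m, decide (f m ⊆ g n) = true ∧ y ∈ f m} = {n | y ∈ g n} := by
      ext n
      simp only [Set.mem_setOf_eq, decide_eq_true_eq]
      constructor
      · rintro ⟨m, hsub, hym⟩
        exact hsub hym
      · intro hy
        obtain ⟨m, hsub, hym⟩ := hcover (g n) (hg n) y hy
        exact ⟨m, hsub, hym⟩
    rw [hsets]
end

section
/- Let Z be a space, 1 ≤ η < ω₁, and Δ, Γ ⊆ 𝒫(Z). Then the dual of SD_η(Δ, Γ) equals SD_η(dual of Δ, dual of Γ). That is, {Z \ A : A ∈ SD_η(Δ, Γ)} = SD_η({Z \ A : A ∈ Δ}, {Z \ A : A ∈ Γ}). -/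
open Set

/-- Louveau's separated difference operation
`SD_η((V_{ξ,n}), (A_{ξ,n}), A*)`. -/
def SDop {Z : Type*} (η : Ordinal.{0}) (V A : Ordinal.{0} → ℕ → Set Z)
    (Astar : Set Z) : Set Z :=
  (⋃ ξ : Ordinal.{0}, ⋃ (_ : ξ < η), ⋃ n : ℕ,
      (A ξ n ∩ (V ξ n \ ⋃ ξ' : Ordinal.{0}, ⋃ (_ : ξ' < ξ), ⋃ m : ℕ, V ξ' m)))
    ∪ (Astar \ ⋃ ξ : Ordinal.{0}, ⋃ (_ : ξ < η), ⋃ n : ℕ, V ξ n)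

/-- The class `SD_η(Δ, Γ*)` of separated differences: all sets
`SD_η((V_{ξ,n}), (A_{ξ,n}), A*)` where the `V_{ξ,n}` are open and pairwise
disjoint for fixed `ξ`, each `A_{ξ,n} ∈ Δ`, and `A* ∈ Γ*`. -/
def SDclass (Z : Type*) [TopologicalSpace Z] (η : Ordinal.{0})
    (Δ Γ : Set (Set Z)) : Set (Set Z) :=
  {B | ∃ (V A : Ordinal.{0} → ℕ → Set Z) (Astar : Set Z),
      (∀ ξ < η, ∀ n : ℕ, IsOpen (V ξ n)) ∧
      (∀ ξ < η, ∀ m n : ℕ, m ≠ n → Disjoint (V ξ m) (V ξ n)) ∧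
      (∀ ξ < η, ∀ n : ℕ, A ξ n ∈ Δ) ∧ Astar ∈ Γ ∧ B = SDop η V A Astar}

lemma mem_SDop {Z : Type*} (η : Ordinal.{0}) (V A : Ordinal.{0} → ℕ → Set Z)
    (Astar : Set Z) (z : Z) :
    z ∈ SDop η V A Astar ↔
      (∃ ξ, ξ < η ∧ ∃ n, z ∈ A ξ n ∧ z ∈ V ξ n ∧ ∀ ξ' < ξ, ∀ m : ℕ, z ∉ V ξ' m) ∨
      (z ∈ Astar ∧ ∀ ξ < η, ∀ n : ℕ, z ∉ V ξ n) := by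
  simp only [SDop, mem_union, mem_iUnion, mem_inter_iff, mem_diff, not_exists]
  constructor
  · rintro (⟨ξ, hξ, n, hA, hV, hns⟩ | ⟨hA, hns⟩)
    · exact Or.inl ⟨ξ, hξ, n, hA, hV, fun ξ' hξ' m hm => hns ξ' hξ' m hm⟩
    · exact Or.inr ⟨hA, fun ξ hξ n hn => hns ξ hξ n hn⟩
  · rintro (⟨ξ, hξ, n, hA, hV, hns⟩ | ⟨hA, hns⟩)
    · exact Or.inl ⟨ξ, hξ, n, hA, hV, fun ξ' hξ' m => hns ξ' hξ' m⟩
    · exact Or.inr ⟨hA, fun ξ hξ n => hns ξ hξ n⟩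

lemma SDop_compl {Z : Type*} (η : Ordinal.{0}) (V A : Ordinal.{0} → ℕ → Set Z)
    (Astar : Set Z)
    (hd : ∀ ξ < η, ∀ m n : ℕ, m ≠ n → Disjoint (V ξ m) (V ξ n)) :
    (SDop η V A Astar)ᶜ = SDop η V (fun ξ n => (A ξ n)ᶜ) Astarᶜ := by
  ext z
  rw [mem_compl_iff, mem_SDop, mem_SDop]
  by_cases hU : ∃ ξ, ξ < η ∧ ∃ n : ℕ, z ∈ V ξ n
  · obtain ⟨ξ₀, ⟨hξ₀η, n₀, hzV⟩, hmin⟩ := wellFounded_lt.has_min _ hU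
    have hnot : ∀ ξ' < ξ₀, ∀ m : ℕ, z ∉ V ξ' m := fun ξ' hξ' m hm =>
      hmin ξ' ⟨hξ'.trans hξ₀η, m, hm⟩ hξ'
    have key : ∀ B : Ordinal.{0} → ℕ → Set Z,
        ((∃ ξ, ξ < η ∧ ∃ n, z ∈ B ξ n ∧ z ∈ V ξ n ∧ ∀ ξ' < ξ, ∀ m : ℕ, z ∉ V ξ' m) ↔
          z ∈ B ξ₀ n₀) := by
      intro B
      constructor
      · rintro ⟨ξ, hξ, n, hB, hV, hns⟩
        have hξeq : ξ = ξ₀ := by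
          rcases lt_trichotomy ξ ξ₀ with h | h | h
          · exact absurd hV (hnot ξ h n)
          · exact h
          · exact absurd hzV (hns ξ₀ h n₀)
        subst hξeq
        have hneq : n = n₀ := by
          by_contra hne
          exact (hd ξ hξ n n₀ hne).le_bot ⟨hV, hzV⟩
        subst hneq
        exact hB
      · intro hB
        exact ⟨ξ₀, hξ₀η, n₀, hB, hzV, hnot⟩
    have hsnd : ∀ C : Set Z, ¬ (z ∈ C ∧ ∀ ξ < η, ∀ n : ℕ, z ∉ V ξ n) := by
      rintro C ⟨_, hns⟩
      exact hns ξ₀ hξ₀η n₀ hzV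
    constructor
    · intro h
      left
      rw [key]
      intro hzA
      exact h (Or.inl ((key A).mpr hzA))
    · rintro (h | h) h'
      · rw [key] at h
        rcases h' with h' | h'
        · exact h ((key A).mp h')
        · exact hsnd Astar h'
      · exact hsnd Astarᶜ h
  · push_neg at hU
    have hfst : ∀ B : Ordinal.{0} → ℕ → Set Z,
        ¬ (∃ ξ, ξ < η ∧ ∃ n, z ∈ B ξ n ∧ z ∈ V ξ n ∧ ∀ ξ' < ξ, ∀ m : ℕ, z ∉ V ξ' m) := by
      rintro B ⟨ξ, hξ, n, _, hV, _⟩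
      exact hU ξ hξ n hV
    constructor
    · intro h
      right
      refine ⟨fun hzA => h (Or.inr ⟨hzA, fun ξ hξ n => hU ξ hξ n⟩), fun ξ hξ n => hU ξ hξ n⟩
    · rintro (h | ⟨hA, _⟩) h'
      · exact hfst _ h
      · rcases h' with h' | ⟨hA', _⟩
        · exact hfst A h'
        · exact hA hA'

/-- For `1 ≤ η < ω₁`, the dual of `SD_η(Δ, Γ)` is
`SD_η(Δ̌, Γ̌)`:  `{Z \ A : A ∈ SD_η(Δ, Γ)} = SD_η({Z \ A : A ∈ Δ}, {Z \ A : A ∈ Γ})`. -/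
theorem stmt14 {Z : Type*} [TopologicalSpace Z] (η : Ordinal.{0})
    (hη1 : 1 ≤ η) (hηc : η.card ≤ Cardinal.aleph0) (Δ Γ : Set (Set Z)) :
    compl '' SDclass Z η Δ Γ = SDclass Z η (compl '' Δ) (compl '' Γ) := by
  ext B
  constructor
  · rintro ⟨C, ⟨V, A, Astar, h1, h2, h3, h4, rfl⟩, rfl⟩
    refine ⟨V, fun ξ n => (A ξ n)ᶜ, Astarᶜ, h1, h2, ?_, ⟨Astar, h4, rfl⟩,
      SDop_compl η V A Astar h2⟩
    intro ξ hξ n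
    exact ⟨A ξ n, h3 ξ hξ n, rfl⟩
  · rintro ⟨V, A, Astar, h1, h2, h3, h4, rfl⟩
    obtain ⟨E, hE, rfl⟩ := h4
    refine ⟨SDop η V (fun ξ n => (A ξ n)ᶜ) E, ⟨V, fun ξ n => (A ξ n)ᶜ, E, h1, h2, ?_, hE, rfl⟩, ?_⟩
    · intro ξ hξ n
      obtain ⟨D, hD, hDe⟩ := h3 ξ hξ n
      show (A ξ n)ᶜ ∈ Δ
      rw [← hDe, compl_compl]; exact hD
    · rw [SDop_compl η V _ E h2]
      simp only [compl_compl]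
end

section
/- Let Z be a zero-dimensional Polish space and let A ⊆ Z with A ∉ Δ⁰_1(Z) be selfdual (i.e., A ≤ Z \ A). Suppose V ⊆ Z is clopen and V ∉ I(A), where I(A) is the collection of clopen sets that admit a clopen partition into pieces U with U ∩ A < A. Then V ∩ A ≤ V \ A in the space V. -/
open Set

/-- Wadge reduction in a space `Z`: `A ≤ B` iff `A = f⁻¹[B]` for some
continuous `f : Z → Z`. -/
def WadgeLe {Z : Type*} [TopologicalSpace Z] (A B : Set Z) : Prop :=
  ∃ f : Z → Z, Continuous f ∧ A = f ⁻¹' B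

/-- Strict Wadge reduction. -/
def WadgeLt {Z : Type*} [TopologicalSpace Z] (A B : Set Z) : Prop :=
  WadgeLe A B ∧ ¬ WadgeLe B A

/-- A space is zero-dimensional if it is non-empty and has a base of clopen
sets. -/
def ZeroDimensional (Z : Type*) [t : TopologicalSpace Z] : Prop :=
  Nonempty Z ∧ ∃ b : Set (Set Z), (∀ s ∈ b, IsClopen s) ∧
    TopologicalSpace.IsTopologicalBasis b

/-- `V ∈ I(A)`: the clopen set `V` admits a partition into clopen pieces `U`
with `U ∩ A < A`. -/
def MemIdealI {Z : Type*} [TopologicalSpace Z] (A V : Set Z) : Prop :=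
  ∃ 𝒰 : Set (Set Z), (∀ U ∈ 𝒰, IsClopen U) ∧ (∀ U ∈ 𝒰, U ⊆ V) ∧
    (∀ U ∈ 𝒰, U.Nonempty) ∧ (∀ U ∈ 𝒰, ∀ U' ∈ 𝒰, U ≠ U' → Disjoint U U') ∧
    ⋃₀ 𝒰 = V ∧ ∀ U ∈ 𝒰, WadgeLt (U ∩ A) A

/-- Let `Z` be a zero-dimensional Polish space and `A ⊆ Z` a
selfdual set which is not clopen. If `V` is clopen and `V ∉ I(A)`, then
`V ∩ A ≤ V \ A` in the space `V`. -/
theorem stmt18 {Z : Type*} [TopologicalSpace Z] [PolishSpace Z]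
    (hzd : ZeroDimensional Z) (A : Set Z) (hsd : WadgeLe A Aᶜ)
    (hA : ¬ IsClopen A) (V : Set Z) (hV : IsClopen V) (hVI : ¬ MemIdealI A V) :
    ∃ f : V → V, Continuous f ∧
      (((↑) : V → Z) ⁻¹' A) = f ⁻¹' (((↑) : V → Z) ⁻¹' (V \ A)) := by
  classical
  -- V is nonempty, else 𝒰 = ∅ witnesses V ∈ I(A)
  have hVne : V.Nonempty := by
    rcases V.eq_empty_or_nonempty with h | h
    · exact absurd ⟨∅, by simp, by simp, by simp, by simp, by simp [h], by simp⟩ hVI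
    · exact h
  -- A is neither ∅ nor univ
  have hAne : A ≠ univ := fun h => hA (h ▸ isClopen_univ)
  obtain ⟨z₀, hz₀⟩ : ∃ z, z ∉ A := by
    by_contra h
    push_neg at h
    exact hAne (eq_univ_of_forall h)
  -- V ∩ A ≤ A
  have hle : WadgeLe (V ∩ A) A := by
    refine ⟨fun z => if z ∈ V then z else z₀, ?_, ?_⟩
    · apply continuous_if
      · intro a ha
        have he : frontier {x : Z | x ∈ V} = ∅ := hV.frontier_eq
        rw [he] at ha
        exact absurd ha (notMem_empty a)
      · exact continuous_id.continuousOn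
      · exact continuous_const.continuousOn
    · ext z
      by_cases hz : z ∈ V <;> simp [hz, hz₀]
  -- ¬ (V ∩ A < A), via the partition {V}
  have hnlt : ¬ WadgeLt (V ∩ A) A := by
    intro hlt
    refine hVI ⟨{V}, ?_, ?_, ?_, ?_, ?_, ?_⟩ <;> simp [hV, hVne, hlt]
  -- hence A ≤ V ∩ A
  obtain ⟨g, hg, hgA⟩ : WadgeLe A (V ∩ A) := by
    by_contra h
    exact hnlt ⟨hle, h⟩
  -- V \ A is nonempty
  obtain ⟨b₀, hb₀⟩ : (V \ A).Nonempty := by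
    rcases (V \ A).eq_empty_or_nonempty with h | h
    · exfalso
      have hsub : V ⊆ A := fun x hx => by
        by_contra hxA
        exact absurd (mem_diff_of_mem hx hxA) (h ▸ notMem_empty x)
      have : V ∩ A = V := inter_eq_left.mpr hsub
      rw [this] at hgA
      exact hA (hgA ▸ hV.preimage hg)
    · exact h
  obtain ⟨h₀, hh₀, hh₀A⟩ := hsd
  -- The key map
  set k : V → Z := fun x => g (h₀ ↑x) with hk
  have hkc : Continuous k := hg.comp (hh₀.comp continuous_subtype_val)
  set F : V → Z := fun x => if k x ∈ V then k x else b₀ with hF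
  have hFc : Continuous F := by
    apply continuous_if
    · intro a ha
      have : IsClopen {x : V | k x ∈ V} := hV.preimage hkc
      have he : frontier {x : V | k x ∈ V} = ∅ := this.frontier_eq
      rw [he] at ha
      exact absurd ha (notMem_empty a)
    · exact hkc.continuousOn
    · exact continuous_const.continuousOn
  have hFmem : ∀ x, F x ∈ V := by
    intro x
    by_cases hx : k x ∈ V <;> simp [hF, hx, hb₀.1]
  refine ⟨fun x => ⟨F x, hFmem x⟩, hFc.subtype_mk _, ?_⟩
  ext x
  simp only [mem_preimage]
  constructor
  · intro hxA
    -- x ∈ A ⇒ h₀ x ∈ Aᶜ ⇒ k x ∉ V ∩ A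
    have h1 : h₀ ↑x ∈ Aᶜ := by rw [hh₀A] at hxA; exact hxA
    have h2 : k x ∉ V ∩ A := by
      intro hmem
      have : h₀ ↑x ∈ A := by rw [hgA]; exact hmem
      exact h1 this
    by_cases hx : k x ∈ V
    · have : F x = k x := if_pos hx
      rw [this]
      exact ⟨hx, fun hka => h2 ⟨hx, hka⟩⟩
    · have : F x = b₀ := if_neg hx
      rw [this]
      exact hb₀
  · intro hFx
    -- x ∉ A ⇒ h₀ x ∈ A ⇒ k x ∈ V ∩ A ⇒ F x ∈ A, contradiction
    by_contra hxA
    have h1 : h₀ ↑x ∈ A := by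
      by_contra h
      exact hxA (by rw [hh₀A]; exact h)
    have h2 : k x ∈ V ∩ A := by rw [hgA] at h1; exact h1
    have : F x = k x := if_pos h2.1
    rw [this] at hFx
    exact hFx.2 h2.2
end

section
/- Let Z be a zero-dimensional Polish space on which the Wadge-reduction relation is well-founded and satisfies Wadge's Lemma (for any A, B in the relevant class, A ≤ B or Z \ B ≤ A). Suppose A ⊆ Z and 𝒰 is an open cover of Z such that A ∩ U < A in Z for every U ∈ 𝒰. Then A is selfdual, i.e., Z \ A ≤ A. -/
open Set

/-- Let `Z` be a zero-dimensional Polish space on which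
Wadge reduction is well-founded and satisfies Wadge's Lemma (for all `A, B`,
either `A ≤ B` or `Z \ B ≤ A`). If `A ⊆ Z` and `𝒰` is an open cover of `Z`
with `A ∩ U < A` for every `U ∈ 𝒰`, then `A` is selfdual: `Z \ A ≤ A`. -/
theorem stmt19 {Z : Type*} [TopologicalSpace Z] [PolishSpace Z]
    (hzd : ZeroDimensional Z)
    (hwf : WellFounded (fun A B : Set Z => WadgeLt A B))
    (hWadge : ∀ A B : Set Z, WadgeLe A B ∨ WadgeLe Bᶜ A)
    (A : Set Z) (𝒰 : Set (Set Z)) (hopen : ∀ U ∈ 𝒰, IsOpen U)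
    (hcover : ⋃₀ 𝒰 = univ) (hlt : ∀ U ∈ 𝒰, WadgeLt (A ∩ U) A) :
    WadgeLe Aᶜ A := by
  classical
  obtain ⟨⟨z0⟩, b, hb_clopen, hb_basis⟩ := hzd
  -- For each U in the cover, (A ∩ U)ᶜ ≤ A by Wadge's Lemma.
  have key : ∀ U ∈ 𝒰, WadgeLe (A ∩ U)ᶜ A := by
    intro U hU
    rcases hWadge A (A ∩ U) with h | h
    · exact absurd h (hlt U hU).2
    · exact h
  -- Clopen basic sets contained in some member of the cover, covering Z.
  set S : Set (Set Z) := {V | V ∈ b ∧ ∃ U ∈ 𝒰, V ⊆ U} with hSdef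
  have hSopen : ∀ V ∈ S, IsOpen V := fun V hV => (hb_clopen V hV.1).2
  have hScover : ⋃₀ S = univ := by
    apply eq_univ_of_forall
    intro x
    have hx : x ∈ ⋃₀ 𝒰 := hcover ▸ mem_univ x
    rcases hx with ⟨U, hU, hxU⟩
    rcases hb_basis.exists_subset_of_mem_open hxU (hopen U hU) with ⟨V, hVb, hxV, hVU⟩
    exact ⟨V, ⟨hVb, U, hU, hVU⟩, hxV⟩
  obtain ⟨T, hTc, hTS, hTcover⟩ := TopologicalSpace.isOpen_sUnion_countable S hSopen
  rw [hScover] at hTcover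
  have hTne : T.Nonempty := by
    rcases eq_empty_or_nonempty T with h | h
    · exfalso
      have : z0 ∈ ⋃₀ T := hTcover ▸ mem_univ z0
      rw [h] at this
      simp at this
    · exact h
  obtain ⟨V, hVrange⟩ := Set.Countable.exists_eq_range hTc hTne
  have hVS : ∀ n, V n ∈ S := fun n => hTS (hVrange ▸ mem_range_self n)
  have hVclopen : ∀ n, IsClopen (V n) := fun n => hb_clopen _ (hVS n).1
  choose U hU𝒰 hVU using fun n => (hVS n).2
  choose f hf_cont hf_eq using fun n => key (U n) (hU𝒰 n)
  have hex : ∀ x : Z, ∃ n, x ∈ V n := by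
    intro x
    have hx : x ∈ ⋃₀ T := hTcover ▸ mem_univ x
    rcases hx with ⟨W, hWT, hxW⟩
    rw [hVrange] at hWT
    rcases hWT with ⟨n, rfl⟩
    exact ⟨n, hxW⟩
  set N : Z → ℕ := fun x => Nat.find (hex x) with hNdef
  have hNspec : ∀ x, x ∈ V (N x) := fun x => Nat.find_spec (hex x)
  have hNmin : ∀ x, ∀ k < N x, x ∉ V k := fun x k hk => Nat.find_min (hex x) hk
  set g : Z → Z := fun x => f (N x) x with hgdef
  refine ⟨g, ?_, ?_⟩
  · -- continuity: locally, g equals f n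
    rw [continuous_iff_continuousAt]
    intro x
    set n := N x with hn
    set W : Set Z := V n ∩ (⋃ k ∈ Finset.range n, V k)ᶜ with hWdef
    have hWopen : IsOpen W := by
      apply (hVclopen n).2.inter
      exact isOpen_compl_iff.mpr (isClosed_biUnion_finset fun k _ => (hVclopen k).1)
    have hxW : x ∈ W := by
      refine ⟨hNspec x, ?_⟩
      simp only [mem_compl_iff, mem_iUnion, Finset.mem_range, not_exists]
      intro k hk
      exact hNmin x k hk
    have hNW : ∀ y ∈ W, N y = n := by
      intro y hy
      have h1 : y ∈ V n := hy.1
      have h2 : ∀ k < n, y ∉ V k := by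
        intro k hk
        have := hy.2
        simp only [mem_compl_iff, mem_iUnion, Finset.mem_range, not_exists] at this
        exact this k hk
      exact (Nat.find_eq_iff (hex y)).2 ⟨h1, h2⟩
    have heq : ∀ y ∈ W, f n y = g y := by
      intro y hy
      simp only [hgdef, hNW y hy]
    exact ContinuousAt.congr ((hf_cont n).continuousAt)
      (Filter.eventuallyEq_of_mem (hWopen.mem_nhds hxW) heq)
  · -- Aᶜ = g⁻¹ A
    ext x
    have hxV : x ∈ V (N x) := hNspec x
    have hxU : x ∈ U (N x) := hVU (N x) hxV
    have h := hf_eq (N x)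
    have hx1 : x ∈ (A ∩ U (N x))ᶜ ↔ x ∉ A := by
      simp [mem_compl_iff, hxU]
    have hx2 : x ∈ (A ∩ U (N x))ᶜ ↔ f (N x) x ∈ A := by
      rw [h]; rfl
    simp only [mem_compl_iff, mem_preimage, hgdef]
    rw [← hx2, hx1]
end
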